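/- For all integers n ≥ 1 and 0 ≤ m with 2m ≤ n, the space of highest weight vectors of weight n − 2m in V^⊗n, namely {v ∈ V^⊗n : H·v = (n − 2m)·v and E·v = 0}, has complex dimension binom(n,m) − binom(n,m−1) (with binom(n,−1) := 0). Equivalently, the simple sl₂(ℂ)-module of highest weight n − 2m occurs in V^⊗n with multiplicity binom(n,m) − binom(n,m−1). -/

import Mathlib

open scoped TensorProduct

noncomputable section

/-- V = ℂ². -/
abbrev V2 : Type := Fin 2 → ℂ

/-- The basis vectors e₁ = `bvec 0`, e₂ = `bvec 1` of V = ℂ². -/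
def bvec (j : Fin 2) : V2 := Pi.single j 1

/-- The matrix of H : H·e₁ = −e₁, H·e₂ = e₂. -/
def Hmat : Matrix (Fin 2) (Fin 2) ℂ := !![-1, 0; 0, 1]

/-- The matrix of E : E·e₁ = e₂, E·e₂ = 0. -/
def Emat : Matrix (Fin 2) (Fin 2) ℂ := !![0, 0; 1, 0]

/-- The matrix of F : F·e₂ = e₁, F·e₁ = 0. -/
def Fmat : Matrix (Fin 2) (Fin 2) ℂ := !![0, 1; 0, 0]

/-- The action of a matrix `g` on the `n`-fold tensor power of V = ℂ² by derivations:
`g·(v₁⊗⋯⊗vₙ) = Σᵢ v₁⊗⋯⊗(g·vᵢ)⊗⋯⊗vₙ`. -/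
def derivAction (n : ℕ) (g : Matrix (Fin 2) (Fin 2) ℂ) :
    (⨂[ℂ] _ : Fin n, V2) →ₗ[ℂ] ⨂[ℂ] _ : Fin n, V2 :=
  ∑ i : Fin n, PiTensorProduct.map
    (Function.update (fun _ : Fin n => (LinearMap.id : V2 →ₗ[ℂ] V2)) i g.mulVecLin)

namespace Stmt5

variable {n : ℕ}

abbrev X (n : ℕ) := Fin n → Fin 2
abbrev P (n : ℕ) := X n → ℂ
abbrev T (n : ℕ) := ⨂[ℂ] _ : Fin n, V2

/-- number of zeros -/
def zc (f : X n) : ℕ := (Finset.univ.filter fun i => f i = 0).card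

def wt (n : ℕ) (f : X n) : ℂ := (n : ℂ) - 2 * zc f

lemma fin2 (v : Fin 2) : v = 0 ∨ v = 1 := by fin_cases v <;> simp

lemma fin2' (v : Fin 2) : v = 1 ↔ ¬ v = 0 := by fin_cases v <;> simp

lemma zc_le (f : X n) : zc f ≤ n := by
  simpa [zc] using Finset.card_filter_le Finset.univ (fun i => f i = 0)

lemma card_ones (f : X n) :
    (Finset.univ.filter fun i => f i = 1).card = n - zc f := by
  have h : ∀ i, f i = 1 ↔ ¬ f i = 0 := fun i => fin2' (f i)
  rw [Finset.filter_congr (fun i _ => h i)]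
  have := Finset.card_filter_add_card_filter_not (s := Finset.univ)
    (p := fun i : Fin n => f i = 0)
  simp only [Finset.card_univ, Fintype.card_fin] at this
  unfold zc
  omega


open Finset Function

lemma filter_update_zero (g : X n) (i : Fin n) (hi : g i = 1) :
    (univ.filter fun j => update g i 0 j = 0) = insert i (univ.filter fun j => g j = 0) := by
  ext j
  simp only [mem_filter, mem_univ, true_and, mem_insert]
  rcases eq_or_ne j i with rfl | hj
  · simp [hi]
  · simp [update_of_ne hj, hj]

lemma filter_update_one (f : X n) (i : Fin n) (hi : f i = 0) :
    (univ.filter fun j => update f i 1 j = 0) = (univ.filter fun j => f j = 0).erase i := by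
  ext j
  simp only [mem_filter, mem_univ, true_and, mem_erase]
  rcases eq_or_ne j i with rfl | hj
  · simp
  · simp [update_of_ne hj, hj]

lemma zc_update_zero {g : X n} {i : Fin n} (hi : g i = 1) :
    zc (update g i 0) = zc g + 1 := by
  unfold zc
  rw [filter_update_zero g i hi, card_insert_of_notMem (by simp [hi])]

lemma zc_update_one {f : X n} {i : Fin n} (hi : f i = 0) :
    zc (update f i 1) + 1 = zc f := by
  unfold zc
  rw [filter_update_one f i hi, card_erase_add_one (by simp [hi])]

def Eop (n : ℕ) : P n →ₗ[ℂ] P n where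
  toFun x := fun g => ∑ i ∈ univ.filter (fun i => g i = 1), x (update g i 0)
  map_add' x y := by funext g; simp [Finset.sum_add_distrib]
  map_smul' c x := by funext g; simp [Finset.mul_sum]

def Fop (n : ℕ) : P n →ₗ[ℂ] P n where
  toFun x := fun f => ∑ i ∈ univ.filter (fun i => f i = 0), x (update f i 1)
  map_add' x y := by funext g; simp [Finset.sum_add_distrib]
  map_smul' c x := by funext g; simp [Finset.mul_sum]

def Hop (n : ℕ) : P n →ₗ[ℂ] P n where
  toFun x := fun f => wt n f * x f
  map_add' x y := by funext g; simp [mul_add]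
  map_smul' c x := by funext g; simp; ring

lemma Hop_apply (x : P n) (f : X n) : Hop n x f = wt n f * x f := rfl

lemma Eop_apply (x : P n) (g : X n) :
    Eop n x g = ∑ i ∈ univ.filter (fun i => g i = 1), x (update g i 0) := rfl

lemma Fop_apply (x : P n) (f : X n) :
    Fop n x f = ∑ i ∈ univ.filter (fun i => f i = 0), x (update f i 1) := rfl


lemma comm_EF (x : P n) (g : X n) :
    Eop n (Fop n x) g - Fop n (Eop n x) g = wt n g * x g := by
  classical
  set A1 := univ.filter (fun i => g i = 1) with hA1
  set A0 := univ.filter (fun i => g i = 0) with hA0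
  have hne : ∀ i ∈ A1, ∀ j ∈ A0, j ≠ i := by
    intro i hi j hj h
    subst h
    simp only [hA1, hA0, mem_filter] at hi hj
    rw [hi.2] at hj
    exact absurd hj.2 (by decide)
  have hE : Eop n (Fop n x) g
      = A1.card • x g + ∑ i ∈ A1, ∑ j ∈ A0, x (update (update g i 0) j 1) := by
    rw [Eop_apply]
    have : ∀ i ∈ A1, Fop n x (update g i 0)
        = x g + ∑ j ∈ A0, x (update (update g i 0) j 1) := by
      intro i hi
      have hgi : g i = 1 := by simpa [hA1] using hi
      rw [Fop_apply, filter_update_zero g i hgi, sum_insert (by simp [hA0, hgi])]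
      congr 1
      rw [update_idem, ← hgi, update_eq_self]
    rw [sum_congr rfl this, Finset.sum_add_distrib, sum_const]
  have hF : Fop n (Eop n x) g
      = A0.card • x g + ∑ j ∈ A0, ∑ i ∈ A1, x (update (update g j 1) i 0) := by
    rw [Fop_apply]
    have : ∀ j ∈ A0, Eop n x (update g j 1)
        = x g + ∑ i ∈ A1, x (update (update g j 1) i 0) := by
      intro j hj
      have hgj : g j = 0 := by simpa [hA0] using hj
      have hfil : (univ.filter fun i => update g j 1 i = 1)
          = insert j A1 := by
        ext i
        simp only [mem_filter, mem_univ, true_and, mem_insert, hA1]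
        rcases eq_or_ne i j with rfl | hij
        · simp
        · simp [update_of_ne hij, hij]
      rw [Eop_apply, hfil, sum_insert (by simp [hA1, hgj])]
      congr 1
      rw [update_idem, ← hgj, update_eq_self]
    rw [sum_congr rfl this, Finset.sum_add_distrib, sum_const]
  have hdouble : ∑ i ∈ A1, ∑ j ∈ A0, x (update (update g i 0) j 1)
      = ∑ j ∈ A0, ∑ i ∈ A1, x (update (update g j 1) i 0) := by
    rw [Finset.sum_comm]
    refine sum_congr rfl fun j hj => sum_congr rfl fun i hi => ?_
    rw [update_comm (hne i hi j hj)]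
  rw [hE, hF, hdouble]
  have hc1 : A1.card = n - zc g := card_ones g
  have hc0 : A0.card = zc g := rfl
  rw [hc1, hc0]
  have : ((n - zc g : ℕ) : ℂ) - (zc g : ℕ) = wt n g := by
    rw [Nat.cast_sub (zc_le g), wt]; ring
  push_cast [nsmul_eq_mul]
  rw [← this]
  push_cast [Nat.cast_sub (zc_le g)]
  ring

def pair (x y : P n) : ℂ := ∑ f, (starRingEnd ℂ) (x f) * y f

lemma pair_comm (x y : P n) : pair x y = (starRingEnd ℂ) (pair y x) := by
  simp [pair, map_sum, map_mul, mul_comm]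

lemma up_down {g : X n} {i : Fin n} (h : g i = 1) : update (update g i 0) i 1 = g := by
  rw [update_idem, ← h, update_eq_self]

lemma down_up {f : X n} {i : Fin n} (h : f i = 0) : update (update f i 1) i 0 = f := by
  rw [update_idem, ← h, update_eq_self]

lemma flip_invol (i : Fin n) :
    Function.Involutive (fun f : X n => update f i (if f i = 0 then 1 else 0)) := by
  intro f
  funext j
  rcases eq_or_ne j i with rfl | hj
  · simp only [update_self]
    rcases fin2 (f j) with h | h <;> rw [h] <;> decide
  · simp only [update_of_ne hj]

lemma pair_F_left (x y : P n) : pair (Fop n x) y = pair x (Eop n y) := by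
  classical
  have lhs_eq : pair (Fop n x) y
      = ∑ i : Fin n, ∑ f : X n,
          (if f i = 0 then (starRingEnd ℂ) (x (update f i 1)) * y f else 0) := by
    rw [pair, Finset.sum_comm]
    refine Finset.sum_congr rfl fun f _ => ?_
    rw [Fop_apply, map_sum, Finset.sum_mul, Finset.sum_filter]
  have rhs_eq : pair x (Eop n y)
      = ∑ i : Fin n, ∑ g : X n,
          (if g i = 1 then (starRingEnd ℂ) (x g) * y (update g i 0) else 0) := by
    rw [pair, Finset.sum_comm]
    refine Finset.sum_congr rfl fun g _ => ?_
    rw [Eop_apply, Finset.mul_sum, Finset.sum_filter]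
  rw [lhs_eq, rhs_eq]
  refine (Finset.sum_congr rfl fun i _ => ?_).symm
  refine Fintype.sum_equiv ((flip_invol i).toPerm) _ _ fun g => ?_
  simp only [Function.Involutive.coe_toPerm]
  rcases fin2 (g i) with h | h
  · rw [if_neg (by rw [h]; decide)]
    simp [h]
  · have c0 : (if g i = 0 then (1:Fin 2) else 0) = 0 := by rw [h]; decide
    rw [if_pos h]
    simp [c0, up_down h]
lemma pair_F_right (x y : P n) : pair x (Fop n y) = pair (Eop n x) y := by
  rw [pair_comm, pair_F_left, ← pair_comm]

lemma pair_self (x : P n) : pair x x = ((∑ f, Complex.normSq (x f) : ℝ) : ℂ) := by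
  simp [pair, mul_comm, Complex.mul_conj]

lemma F_inj_level (l : ℕ) (hl : 2 * l < n) (x : P n)
    (hx : ∀ f, zc f ≠ l → x f = 0) (hF : Fop n x = 0) : x = 0 := by
  classical
  have hsplit : ∀ f, (starRingEnd ℂ) (x f) * (Eop n (Fop n x) f)
      = (starRingEnd ℂ) (x f) * (Fop n (Eop n x) f)
        + ((n:ℂ) - 2*l) * ((starRingEnd ℂ) (x f) * x f) := by
    intro f
    rcases eq_or_ne (x f) 0 with h0 | h0
    · simp [h0]
    · have hzc : zc f = l := by
        by_contra h; exact h0 (hx f h)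
      have hc := comm_EF x f
      have : Eop n (Fop n x) f = Fop n (Eop n x) f + wt n f * x f := by
        linear_combination hc
      rw [this, wt, hzc]
      ring
  have key : (0:ℂ) = pair (Eop n x) (Eop n x) + ((n:ℂ) - 2*l) * pair x x := by
    have h1 : pair (Fop n x) (Fop n x) = 0 := by rw [hF]; simp [pair]
    have h2 : pair x (Eop n (Fop n x))
        = pair x (Fop n (Eop n x)) + ((n:ℂ) - 2*l) * pair x x := by
      simp only [pair]
      rw [Finset.mul_sum, ← Finset.sum_add_distrib]
      exact Finset.sum_congr rfl fun f _ => hsplit f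
    calc (0:ℂ) = pair (Fop n x) (Fop n x) := h1.symm
    _ = pair x (Eop n (Fop n x)) := pair_F_left x (Fop n x)
    _ = pair x (Fop n (Eop n x)) + ((n:ℂ) - 2*l) * pair x x := h2
    _ = pair (Eop n x) (Eop n x) + ((n:ℂ) - 2*l) * pair x x := by
        rw [pair_F_right]
  rw [pair_self, pair_self] at key
  have hcast : ((n:ℂ) - 2*l) = (((n:ℝ) - 2*l : ℝ) : ℂ) := by push_cast; ring
  rw [hcast, ← Complex.ofReal_mul, ← Complex.ofReal_add] at key
  have hreal : 0 = (∑ f, Complex.normSq (Eop n x f))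
      + ((n:ℝ) - 2*l) * (∑ f, Complex.normSq (x f)) := by
    exact_mod_cast key
  have hS1 : 0 ≤ ∑ f, Complex.normSq (Eop n x f) :=
    Finset.sum_nonneg fun f _ => Complex.normSq_nonneg _
  have hS2 : 0 ≤ ∑ f, Complex.normSq (x f) :=
    Finset.sum_nonneg fun f _ => Complex.normSq_nonneg _
  have hmu : (0:ℝ) < (n:ℝ) - 2*l := by
    have : (2*l : ℝ) < n := by exact_mod_cast hl
    linarith
  have hS2' : (∑ f, Complex.normSq (x f)) = 0 := by nlinarith
  funext f
  have := (Finset.sum_eq_zero_iff_of_nonneg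
    (fun f _ => Complex.normSq_nonneg (x f))).mp hS2' f (Finset.mem_univ f)
  simpa using Complex.normSq_eq_zero.mp this

/-! ### coordinates on the tensor power -/

def bT (f : X n) : T n := PiTensorProduct.tprod ℂ (fun i => bvec (f i))

def coordML (n : ℕ) : MultilinearMap ℂ (fun _ : Fin n => V2) (P n) :=
  MultilinearMap.pi (fun f : X n =>
    (MultilinearMap.mkPiAlgebra ℂ (Fin n) ℂ).compLinearMap
      (fun i => LinearMap.proj (f i)))

def coordL (n : ℕ) : T n →ₗ[ℂ] P n := PiTensorProduct.lift (coordML n)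

lemma coordL_tprod (v : Fin n → V2) :
    coordL n (PiTensorProduct.tprod ℂ v) = fun f => ∏ i, v i (f i) := by
  rw [coordL, PiTensorProduct.lift.tprod]
  rfl

lemma bvec_apply (j k : Fin 2) : bvec j k = if k = j then 1 else 0 := by
  rw [bvec, Pi.single_apply]

lemma coordL_bT (f : X n) : coordL n (bT f) = Pi.single f 1 := by
  rw [bT, coordL_tprod]
  funext g
  rcases eq_or_ne g f with rfl | hgf
  · simp [bvec_apply]
  · obtain ⟨i, hi⟩ := Function.ne_iff.mp hgf
    rw [Finset.prod_eq_zero (Finset.mem_univ i)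
      (by rw [bvec_apply, if_neg hi]), Pi.single_eq_of_ne hgf]

def invL (n : ℕ) : P n →ₗ[ℂ] T n where
  toFun x := ∑ f, x f • bT f
  map_add' x y := by simp [add_smul, Finset.sum_add_distrib]
  map_smul' c x := by simp [smul_smul, Finset.smul_sum]

lemma expand_tprod (v : Fin n → V2) :
    PiTensorProduct.tprod ℂ v = ∑ f : X n, (∏ i, v i (f i)) • bT f := by
  have hv : v = fun i => ∑ k : Fin 2, v i k • bvec k := by
    funext i k'
    simp [bvec_apply, mul_ite, Finset.sum_apply]
  conv_lhs => rw [hv]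
  rw [(PiTensorProduct.tprod ℂ).map_sum]
  refine Finset.sum_congr rfl fun f _ => ?_
  rw [(PiTensorProduct.tprod ℂ).map_smul_univ]
  rfl

lemma invL_coordL (t : T n) : invL n (coordL n t) = t := by
  have : (invL n) ∘ₗ (coordL n) = LinearMap.id := by
    apply PiTensorProduct.ext
    apply MultilinearMap.ext
    intro v
    simp only [LinearMap.compMultilinearMap_apply, LinearMap.comp_apply,
      LinearMap.id_apply, coordL_tprod]
    rw [expand_tprod v]
    rfl
  exact DFunLike.congr_fun this t

lemma coordL_invL (x : P n) : coordL n (invL n x) = x := by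
  rw [invL]
  simp only [LinearMap.coe_mk, AddHom.coe_mk, map_sum, map_smul, coordL_bT]
  funext g
  simp [Pi.single_apply, mul_ite]

def eqv (n : ℕ) : T n ≃ₗ[ℂ] P n :=
  LinearEquiv.ofLinear (coordL n) (invL n)
    (LinearMap.ext coordL_invL) (LinearMap.ext invL_coordL)

lemma eqv_apply (t : T n) : eqv n t = coordL n t := rfl

lemma eqv_bT (f : X n) : eqv n (bT f) = Pi.single f 1 := coordL_bT f

lemma eqv_symm_single (f : X n) : (eqv n).symm (Pi.single f 1) = bT f := by
  apply (eqv n).injective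
  rw [LinearEquiv.apply_symm_apply, eqv_bT]

/-! ### action on basis vectors -/

lemma derivAction_bT (g : Matrix (Fin 2) (Fin 2) ℂ) (f : X n) :
    derivAction n g (bT f) = ∑ i : Fin n,
      PiTensorProduct.tprod ℂ
        (update (fun j => bvec (f j)) i (g.mulVecLin (bvec (f i)))) := by
  rw [derivAction, LinearMap.sum_apply]
  refine Finset.sum_congr rfl fun i _ => ?_
  rw [bT, PiTensorProduct.map_tprod]
  congr 1
  funext j
  rcases eq_or_ne j i with rfl | hj
  · simp
  · simp [update_of_ne hj]

lemma Hmat_bvec (k : Fin 2) :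
    Hmat.mulVecLin (bvec k) = (if k = 0 then (-1:ℂ) else 1) • bvec k := by
  funext r
  fin_cases k <;> fin_cases r <;>
    simp [Hmat, Matrix.mulVecLin_apply, Matrix.mulVec, dotProduct, bvec,
      Pi.single_apply, Fin.sum_univ_two]

lemma Emat_bvec (k : Fin 2) :
    Emat.mulVecLin (bvec k) = if k = 0 then bvec 1 else 0 := by
  funext r
  fin_cases k <;> fin_cases r <;>
    simp [Emat, Matrix.mulVecLin_apply, Matrix.mulVec, dotProduct, bvec,
      Pi.single_apply, Fin.sum_univ_two]

lemma card_nonzeros (f : X n) :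
    (univ.filter fun i => ¬ f i = 0).card = n - zc f := by
  rw [← card_ones f]
  congr 1
  exact Finset.filter_congr fun i _ => by rw [fin2' (f i)]

lemma dH_bT (f : X n) : derivAction n Hmat (bT f) = wt n f • bT f := by
  rw [derivAction_bT]
  have hterm : ∀ i : Fin n,
      PiTensorProduct.tprod ℂ
        (update (fun j => bvec (f j)) i (Hmat.mulVecLin (bvec (f i))))
      = (if f i = 0 then (-1:ℂ) else 1) • bT f := by
    intro i
    rw [Hmat_bvec, (PiTensorProduct.tprod ℂ).map_update_smul, update_eq_self]
    rfl
  rw [Finset.sum_congr rfl (fun i _ => hterm i), ← Finset.sum_smul]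
  congr 1
  rw [Finset.sum_ite, Finset.sum_const, Finset.sum_const, card_nonzeros]
  have h1 : ((univ.filter fun i => f i = 0).card) = zc f := rfl
  rw [h1, wt]
  rw [nsmul_eq_mul, nsmul_eq_mul, Nat.cast_sub (zc_le f)]
  ring

lemma dE_bT (f : X n) : derivAction n Emat (bT f)
    = ∑ i ∈ univ.filter (fun i => f i = 0), bT (update f i 1) := by
  rw [derivAction_bT]
  have hterm : ∀ i : Fin n,
      PiTensorProduct.tprod ℂ
        (update (fun j => bvec (f j)) i (Emat.mulVecLin (bvec (f i))))
      = if f i = 0 then bT (update f i 1) else 0 := by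
    intro i
    rw [Emat_bvec]
    rcases fin2 (f i) with h | h
    · rw [if_pos h, if_pos h, bT]
      congr 1
      funext j
      rcases eq_or_ne j i with rfl | hj
      · simp
      · simp [update_of_ne hj]
    · rw [if_neg (by rw [h]; decide), if_neg (by rw [h]; decide)]
      exact (PiTensorProduct.tprod ℂ).map_update_zero _ _
  rw [Finset.sum_congr rfl (fun i _ => hterm i), Finset.sum_ite, Finset.sum_const]
  simp only [smul_zero, nsmul_zero, add_zero]

/-! ### conjugation to coordinate operators -/

lemma eqv_expand (t : T n) : t = ∑ f, (eqv n t f) • bT f := (invL_coordL t).symm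

lemma eqv_dH_bT (f : X n) :
    eqv n (derivAction n Hmat (bT f)) = Hop n (eqv n (bT f)) := by
  rw [dH_bT, map_smul, eqv_bT]
  funext g
  rw [Pi.smul_apply, smul_eq_mul, Hop_apply]
  rcases eq_or_ne g f with rfl | hgf
  · rfl
  · rw [Pi.single_eq_of_ne hgf, mul_zero, mul_zero]

lemma eqv_dE_bT (f : X n) :
    eqv n (derivAction n Emat (bT f)) = Eop n (eqv n (bT f)) := by
  rw [dE_bT, map_sum, eqv_bT]
  funext g
  rw [Finset.sum_apply]
  have lhs_eq : ∀ i ∈ univ.filter (fun i => f i = 0),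
      (eqv n (bT (update f i 1)) : P n) g
        = if update f i 1 = g then 1 else 0 := by
    intro i _
    rw [eqv_bT]
    rcases eq_or_ne (update f i 1) g with h | h
    · rw [if_pos h, h, Pi.single_eq_same]
    · rw [if_neg h, Pi.single_eq_of_ne (Ne.symm h)]
  rw [Finset.sum_congr rfl lhs_eq]
  rw [Eop_apply]
  have rhs_eq : ∀ i ∈ univ.filter (fun i => g i = 1),
      ((Pi.single f (1:ℂ) : P n) (update g i 0))
        = (if update g i 0 = f then (1:ℂ) else 0) := by
    intro i _
    rcases eq_or_ne (update g i 0) f with h | h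
    · rw [if_pos h, h, Pi.single_eq_same]
    · rw [if_neg h, Pi.single_eq_of_ne h]
  rw [Finset.sum_congr rfl rhs_eq, Finset.sum_filter, Finset.sum_filter]
  refine Finset.sum_congr rfl fun i _ => ?_
  have hiff : (f i = 0 ∧ update f i 1 = g) ↔ (g i = 1 ∧ update g i 0 = f) := by
    constructor
    · rintro ⟨h1, rfl⟩
      exact ⟨update_self i 1 f, down_up h1⟩
    · rintro ⟨h1, rfl⟩
      exact ⟨update_self i 0 g, up_down h1⟩
  rcases fin2 (f i) with hf | hf
  · rw [if_pos hf]
    rcases eq_or_ne (update f i 1) g with h | h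
    · have := hiff.mp ⟨hf, h⟩
      rw [if_pos h, if_pos this.1, if_pos this.2]
    · rw [if_neg h]
      rcases fin2 (g i) with hg | hg
      · rw [if_neg (by rw [hg]; decide)]
      · rw [if_pos hg]
        rw [if_neg fun hc => h (hiff.mpr ⟨hg, hc⟩).2]
  · rw [if_neg (by rw [hf]; decide)]
    rcases fin2 (g i) with hg | hg
    · rw [if_neg (by rw [hg]; decide)]
    · rw [if_pos hg]
      rw [if_neg fun hc => by
        have := (hiff.mpr ⟨hg, hc⟩).1
        rw [hf] at this
        exact absurd this (by decide)]

lemma eqv_dH (t : T n) :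
    eqv n (derivAction n Hmat t) = Hop n (eqv n t) := by
  conv_lhs => rw [eqv_expand t]
  rw [map_sum, map_sum]
  conv_rhs => rw [eqv_expand t, map_sum, map_sum]
  refine Finset.sum_congr rfl fun f _ => ?_
  simp only [map_smul]
  rw [eqv_dH_bT]

lemma eqv_dE (t : T n) :
    eqv n (derivAction n Emat t) = Eop n (eqv n t) := by
  conv_lhs => rw [eqv_expand t]
  rw [map_sum, map_sum]
  conv_rhs => rw [eqv_expand t, map_sum, map_sum]
  refine Finset.sum_congr rfl fun f _ => ?_
  simp only [map_smul]
  rw [eqv_dE_bT]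

/-! ### weight subspaces -/

def lev (n k : ℕ) : Submodule ℂ (P n) where
  carrier := {x | ∀ f, zc f ≠ k → x f = 0}
  add_mem' := fun ha hb f hf => by
    rw [Pi.add_apply, ha f hf, hb f hf, add_zero]
  zero_mem' := fun f _ => rfl
  smul_mem' := fun c x hx f hf => by
    rw [Pi.smul_apply, hx f hf, smul_zero]

lemma mem_lev {x : P n} {k : ℕ} : x ∈ lev n k ↔ ∀ f, zc f ≠ k → x f = 0 := Iff.rfl

lemma ker_H (m : ℕ) :
    LinearMap.ker (Hop n - ((n:ℂ) - 2*m) • LinearMap.id) = lev n m := by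
  ext x
  simp only [LinearMap.mem_ker, mem_lev]
  constructor
  · intro h f hf
    have h1 : Hop n x f - ((n:ℂ) - 2*m) * x f = 0 := by
      have := congrFun h f
      simpa using this
    rw [Hop_apply] at h1
    have h0 : (wt n f - ((n:ℂ) - 2*m)) * x f = 0 := by ring_nf; linear_combination h1
    rcases mul_eq_zero.mp h0 with h2 | h2
    · exfalso
      apply hf
      rw [wt] at h2
      have : ((zc f : ℂ)) = (m : ℂ) := by linear_combination -h2/2
      exact_mod_cast this
    · exact h2
  · intro hx
    ext f
    simp only [LinearMap.sub_apply, LinearMap.smul_apply, LinearMap.id_apply,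
      Pi.sub_apply, Pi.smul_apply, smul_eq_mul, Hop_apply, Pi.zero_apply]
    rcases eq_or_ne (zc f) m with he | he
    · rw [wt, he]; ring
    · rw [hx f he]; ring

lemma map_ker_conj (A : T n →ₗ[ℂ] T n) (B : P n →ₗ[ℂ] P n)
    (hAB : ∀ t, eqv n (A t) = B (eqv n t)) :
    (LinearMap.ker A).map ((eqv n : T n ≃ₗ[ℂ] P n) : T n →ₗ[ℂ] P n)
      = LinearMap.ker B := by
  ext x
  rw [Submodule.mem_map]
  constructor
  · rintro ⟨t, ht, rfl⟩
    rw [LinearMap.mem_ker] at ht ⊢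
    show B (eqv n t) = 0
    rw [← hAB, ht, map_zero]
  · intro hx
    refine ⟨(eqv n).symm x, ?_, by simp⟩
    rw [LinearMap.mem_ker]
    apply (eqv n).injective
    rw [hAB, LinearEquiv.apply_symm_apply, map_zero]
    exact hx

lemma map_ker_H (m : ℕ) :
    (LinearMap.ker (derivAction n Hmat - ((n:ℂ) - 2*m) • LinearMap.id)).map
      ((eqv n : T n ≃ₗ[ℂ] P n) : T n →ₗ[ℂ] P n) = lev n m := by
  rw [map_ker_conj (derivAction n Hmat - ((n:ℂ) - 2*m) • LinearMap.id)
    (Hop n - ((n:ℂ) - 2*m) • LinearMap.id), ker_H m]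
  intro t
  simp only [LinearMap.sub_apply, LinearMap.smul_apply, LinearMap.id_apply,
    map_sub, map_smul]
  rw [eqv_dH]

lemma map_ker_E :
    (LinearMap.ker (derivAction n Emat)).map
      ((eqv n : T n ≃ₗ[ℂ] P n) : T n →ₗ[ℂ] P n) = LinearMap.ker (Eop n) := by
  rw [map_ker_conj (derivAction n Emat) (Eop n)]
  intro t
  rw [eqv_dE]

def levEquiv (n k : ℕ) : (lev n k) ≃ₗ[ℂ] ({f : X n // zc f = k} → ℂ) where
  toFun x := fun q => x.1 q.1
  map_add' x y := rfl
  map_smul' c x := rfl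
  invFun y := ⟨fun f => if h : zc f = k then y ⟨f, h⟩ else 0,
    fun f hf => dif_neg hf⟩
  left_inv x := by
    apply Subtype.ext
    funext f
    by_cases h : zc f = k
    · simp [dif_pos h]
    · simp only [dif_neg h]
      exact (x.2 f h).symm
  right_inv y := by
    funext q
    simp [dif_pos q.2]

lemma card_level (n k : ℕ) :
    Fintype.card {f : X n // zc f = k} = n.choose k := by
  have e : {f : X n // zc f = k} ≃ {s : Finset (Fin n) // s.card = k} :=
    { toFun := fun f => ⟨univ.filter (fun i => f.1 i = 0), f.2⟩
      invFun := fun s => ⟨fun i => if i ∈ s.1 then 0 else 1, by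
        have : (univ.filter fun i => (if i ∈ s.1 then (0:Fin 2) else 1) = 0) = s.1 := by
          ext i
          simp only [mem_filter, mem_univ, true_and]
          by_cases h : i ∈ s.1
          · simp [h]
          · simp [h]
        unfold zc
        rw [this]
        exact s.2⟩
      left_inv := fun f => by
        apply Subtype.ext
        funext i
        simp only [mem_filter, mem_univ, true_and]
        rcases fin2 (f.1 i) with h | h
        · rw [if_pos h, h]
        · rw [if_neg (by rw [h]; decide), h]
      right_inv := fun s => by
        apply Subtype.ext
        ext i
        simp only [mem_filter, mem_univ, true_and]
        by_cases h : i ∈ s.1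
        · simp [h]
        · simp [h] }
  rw [Fintype.card_congr e, Fintype.card_finset_len, Fintype.card_fin]

lemma lev_zero_le_kerE : lev n 0 ≤ LinearMap.ker (Eop n) := by
  intro x hx
  rw [LinearMap.mem_ker]
  funext g
  rw [Eop_apply]
  refine Finset.sum_eq_zero fun i hi => ?_
  have hgi : g i = 1 := by simpa using hi
  exact hx _ (by rw [zc_update_zero hgi]; omega)

/-! ### restriction to levels as matrices -/

abbrev Qt (n k : ℕ) := {f : X n // zc f = k}

def Mmat (n l : ℕ) : Matrix (Qt n l) (Qt n (l+1)) ℂ :=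
  fun g f => ((univ.filter fun i => g.1 i = 1 ∧ update g.1 i 0 = f.1).card : ℂ)

lemma group_sum {α : Type*} [Fintype α] [DecidableEq α] (s : Finset (Fin n))
    (Fm : Fin n → α) (x : α → ℂ) :
    ∑ a : α, ((s.filter fun i => Fm i = a).card : ℂ) * x a = ∑ i ∈ s, x (Fm i) := by
  rw [← Finset.sum_fiberwise' s Fm x]
  refine Finset.sum_congr rfl fun a _ => ?_
  rw [Finset.sum_const, nsmul_eq_mul]

lemma sum_level {k : ℕ} (t : X n → ℂ) (ht : ∀ f, zc f ≠ k → t f = 0) :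
    ∑ q : Qt n k, t q.1 = ∑ f : X n, t f := by
  rw [← Finset.sum_subtype (univ.filter fun f : X n => zc f = k)
    (fun f => by simp) t]
  exact Finset.sum_subset (Finset.filter_subset _ _)
    (fun f _ hf => ht f (by simpa using hf))

lemma EopLev (l : ℕ) {x : P n} (hx : x ∈ lev n (l+1)) : Eop n x ∈ lev n l := by
  intro g hg
  rw [Eop_apply]
  refine Finset.sum_eq_zero fun i hi => ?_
  have hgi : g i = 1 := by simpa using hi
  exact hx _ (by rw [zc_update_zero hgi]; omega)

lemma FopLev (l : ℕ) {x : P n} (hx : x ∈ lev n l) : Fop n x ∈ lev n (l+1) := by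
  intro g hg
  rw [Fop_apply]
  refine Finset.sum_eq_zero fun i hi => ?_
  have hgi : g i = 0 := by simpa using hi
  refine hx _ fun hc => hg ?_
  have := zc_update_one hgi
  omega

lemma mulVec_Mmat (l : ℕ) (x : P n) (hx : x ∈ lev n (l+1)) (g : Qt n l) :
    (Mmat n l).mulVecLin (fun q : Qt n (l+1) => x q.1) g = Eop n x g.1 := by
  have step0 : (Mmat n l).mulVecLin (fun q : Qt n (l+1) => x q.1) g
      = ∑ q : Qt n (l+1), (Mmat n l) g q * x q.1 := by
    rw [Matrix.mulVecLin_apply]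
    rfl
  rw [step0]
  have hterm : ∀ f : X n,
      ((univ.filter fun i => g.1 i = 1 ∧ update g.1 i 0 = f).card : ℂ)
      = (((univ.filter fun i => g.1 i = 1).filter
          (fun i => update g.1 i 0 = f)).card : ℂ) := by
    intro f
    rw [Finset.filter_filter]
  have step1 : ∑ q : Qt n (l+1), (Mmat n l) g q * x q.1
      = ∑ f : X n,
        (((univ.filter fun i => g.1 i = 1).filter
          (fun i => update g.1 i 0 = f)).card : ℂ) * x f := by
    rw [← sum_level (k := l+1)
      (fun f => (((univ.filter fun i => g.1 i = 1).filter
        (fun i => update g.1 i 0 = f)).card : ℂ) * x f)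
      (fun f hf => by simp [hx f hf])]
    refine Finset.sum_congr rfl fun q _ => ?_
    have hM : (Mmat n l) g q
        = ((univ.filter fun i => g.1 i = 1 ∧ update g.1 i 0 = q.1).card : ℂ) := rfl
    rw [hM, hterm q.1]
  rw [step1, group_sum, Eop_apply]

lemma Mmat_transpose_apply (l : ℕ) (f : Qt n (l+1)) (g : Qt n l) :
    (Mmat n l).transpose f g
      = ((univ.filter fun i => f.1 i = 0 ∧ update f.1 i 1 = g.1).card : ℂ) := by
  rw [Matrix.transpose_apply, Mmat]
  congr 2
  apply Finset.filter_congr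
  intro i _
  constructor
  · rintro ⟨h1, h2⟩
    refine ⟨by rw [← h2]; exact update_self i 0 g.1, by rw [← h2, up_down h1]⟩
  · rintro ⟨h1, h2⟩
    refine ⟨by rw [← h2]; exact update_self i 1 f.1, by rw [← h2, down_up h1]⟩

lemma mulVec_Nmat (l : ℕ) (x : P n) (hx : x ∈ lev n l) (f : Qt n (l+1)) :
    (Mmat n l).transpose.mulVecLin (fun q : Qt n l => x q.1) f = Fop n x f.1 := by
  have step0 : (Mmat n l).transpose.mulVecLin (fun q : Qt n l => x q.1) f
      = ∑ q : Qt n l, (Mmat n l).transpose f q * x q.1 := by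
    rw [Matrix.mulVecLin_apply]
    rfl
  rw [step0]
  have step1 : ∑ q : Qt n l, (Mmat n l).transpose f q * x q.1
      = ∑ g : X n,
        (((univ.filter fun i => f.1 i = 0).filter
          (fun i => update f.1 i 1 = g)).card : ℂ) * x g := by
    rw [← sum_level (k := l)
      (fun g => (((univ.filter fun i => f.1 i = 0).filter
        (fun i => update f.1 i 1 = g)).card : ℂ) * x g)
      (fun g hg => by simp [hx g hg])]
    refine Finset.sum_congr rfl fun q _ => ?_
    rw [Mmat_transpose_apply, ← Finset.filter_filter]
  rw [step1, group_sum, Fop_apply]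

lemma kerE_iff (l : ℕ) (x : P n) (hx : x ∈ lev n (l+1)) :
    Eop n x = 0 ↔ (Mmat n l).mulVecLin (fun q : Qt n (l+1) => x q.1) = 0 := by
  constructor
  · intro h
    funext g
    rw [mulVec_Mmat l x hx g, h]
    rfl
  · intro h
    funext g
    rcases eq_or_ne (zc g) l with he | he
    · have := congrFun h ⟨g, he⟩
      rw [mulVec_Mmat l x hx ⟨g, he⟩] at this
      exact this
    · exact EopLev l hx g he

lemma Nmat_ker (l : ℕ) (hl : 2*l < n) (y : Qt n l → ℂ)
    (hy : (Mmat n l).transpose.mulVecLin y = 0) : y = 0 := by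
  classical
  set x : P n := fun f => if h : zc f = l then y ⟨f, h⟩ else 0 with hxdef
  have hx : x ∈ lev n l := fun f hf => dif_neg hf
  have hres : (fun q : Qt n l => x q.1) = y := by
    funext q
    simp [hxdef, dif_pos q.2]
  have hFx : Fop n x = 0 := by
    funext g
    rcases eq_or_ne (zc g) (l+1) with he | he
    · have h2 := mulVec_Nmat l x hx ⟨g, he⟩
      rw [hres, hy] at h2
      exact h2.symm
    · exact FopLev l hx g he
  have hx0 := F_inj_level l hl x hx hFx
  funext q
  rw [← congrFun hres q, hx0]
  rfl

/-! ### assembling the dimension count -/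

def levKerEquiv (n l : ℕ) :
    ↥(lev n (l+1) ⊓ LinearMap.ker (Eop n)) ≃ₗ[ℂ]
      ↥(LinearMap.ker ((Mmat n l).mulVecLin)) where
  toFun x := ⟨fun q => x.1 q.1, by
    rw [LinearMap.mem_ker]
    exact (kerE_iff l x.1 x.2.1).mp (LinearMap.mem_ker.mp x.2.2)⟩
  map_add' x y := rfl
  map_smul' c x := rfl
  invFun y := ⟨fun f => if h : zc f = l+1 then y.1 ⟨f, h⟩ else 0, by
    constructor
    · exact fun f hf => dif_neg hf
    · show Eop n (fun f => if h : zc f = l+1 then y.1 ⟨f, h⟩ else 0) = 0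
      refine (kerE_iff l _ (fun f hf => dif_neg hf)).mpr ?_
      have : (fun q : Qt n (l+1) =>
          (fun f => if h : zc f = l+1 then y.1 ⟨f, h⟩ else 0) q.1) = y.1 := by
        funext q
        simp [dif_pos q.2]
      rw [this]
      exact LinearMap.mem_ker.mp y.2⟩
  left_inv x := by
    apply Subtype.ext
    funext f
    by_cases h : zc f = l+1
    · simp [dif_pos h]
    · simp only [dif_neg h]
      exact (x.2.1 f h).symm
  right_inv y := by
    apply Subtype.ext
    funext q
    simp [dif_pos q.2]

lemma rank_M (l : ℕ) (hl : 2*l < n) : (Mmat n l).rank = n.choose l := by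
  rw [← Matrix.rank_transpose]
  have h2 := LinearMap.finrank_range_add_finrank_ker ((Mmat n l).transpose.mulVecLin)
  have hker0 : LinearMap.ker ((Mmat n l).transpose.mulVecLin) = ⊥ :=
    LinearMap.ker_eq_bot'.mpr (fun y hy => Nmat_ker l hl y hy)
  rw [hker0, finrank_bot, add_zero, Module.finrank_fintype_fun_eq_card,
    card_level] at h2
  rw [Matrix.rank]
  exact h2

lemma finrank_main (l : ℕ) (hl : 2*(l+1) ≤ n) :
    (Module.finrank ℂ ↥(lev n (l+1) ⊓ LinearMap.ker (Eop n)) : ℤ)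
      = (n.choose (l+1) : ℤ) - n.choose l := by
  rw [LinearEquiv.finrank_eq (levKerEquiv n l)]
  have h1 := LinearMap.finrank_range_add_finrank_ker ((Mmat n l).mulVecLin)
  rw [Module.finrank_fintype_fun_eq_card, card_level] at h1
  have h2 : Module.finrank ℂ (LinearMap.range ((Mmat n l).mulVecLin))
      = n.choose l := by
    have h3 := rank_M (n := n) l (by omega)
    rw [Matrix.rank] at h3
    exact h3
  rw [h2] at h1
  rw [← h1]
  push_cast
  ring

end Stmt5

/-!
STATEMENT 5: for n ≥ 1 and 0 ≤ m with 2m ≤ n, the space of highest weight vectors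
{v ∈ V^⊗n : H·v = (n − 2m)·v and E·v = 0} has complex dimension
binom(n,m) − binom(n,m−1), where binom(n,−1) := 0.  (Stated in ℤ so that the
convention binom(n,−1) = 0 can be expressed for m = 0.)
-/
theorem stmt_5 (n m : ℕ) (hn : 1 ≤ n) (hm : 2 * m ≤ n) :
    (Module.finrank ℂ
      ↥(LinearMap.ker (derivAction n Hmat - ((n : ℂ) - 2 * m) • LinearMap.id) ⊓
        LinearMap.ker (derivAction n Emat)) : ℤ) =
    (n.choose m : ℤ) - (if m = 0 then 0 else (n.choose (m - 1) : ℤ)) := by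
  classical
  have hfr : Module.finrank ℂ
      ↥(LinearMap.ker (derivAction n Hmat - ((n : ℂ) - 2 * m) • LinearMap.id) ⊓
        LinearMap.ker (derivAction n Emat))
      = Module.finrank ℂ ↥(Stmt5.lev n m ⊓ LinearMap.ker (Stmt5.Eop n)) := by
    have hmap : Submodule.map ((Stmt5.eqv n : Stmt5.T n ≃ₗ[ℂ] Stmt5.P n) :
          Stmt5.T n →ₗ[ℂ] Stmt5.P n)
        (LinearMap.ker (derivAction n Hmat - ((n:ℂ) - 2*m) • LinearMap.id) ⊓
          LinearMap.ker (derivAction n Emat))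
        = Stmt5.lev n m ⊓ LinearMap.ker (Stmt5.Eop n) := by
      rw [Submodule.map_inf ((Stmt5.eqv n : Stmt5.T n ≃ₗ[ℂ] Stmt5.P n) :
          Stmt5.T n →ₗ[ℂ] Stmt5.P n) (by exact (Stmt5.eqv n).injective),
        Stmt5.map_ker_H, Stmt5.map_ker_E]
    rw [← LinearEquiv.finrank_map_eq (Stmt5.eqv n), hmap]
  rw [hfr]
  rcases Nat.eq_zero_or_pos m with rfl | hmpos
  · rw [inf_eq_left.mpr Stmt5.lev_zero_le_kerE]
    rw [LinearEquiv.finrank_eq (Stmt5.levEquiv n 0),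
      Module.finrank_fintype_fun_eq_card, Stmt5.card_level]
    simp
  · obtain ⟨l, rfl⟩ : ∃ l, m = l + 1 := ⟨m - 1, by omega⟩
    rw [Stmt5.finrank_main l hm]
    simp
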